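/- Let a, b > 1 and c ≥ 0 with log a ≥ 2 and li(b) = li(a) + c. Then log b ≥ log a + c · (log a)/a − c² · (log a) · (log a − 1) / a². -/

import Mathlib

open Real Set intervalIntegral

/-- The logarithmic integral `li t = ∫_2^t dτ / log τ`. -/
noncomputable def li (t : ℝ) : ℝ := ∫ τ in (2:ℝ)..t, 1 / Real.log τ

lemma invlog_continuousOn : ContinuousOn (fun τ : ℝ => 1 / Real.log τ) (Set.Ioi 1) := by
  apply ContinuousOn.div continuousOn_const
  · exact fun x hx => (Real.continuousAt_log (by
      have : (1:ℝ) < x := hx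
      linarith)).continuousWithinAt
  · intro x hx
    exact ne_of_gt (Real.log_pos hx)

lemma invlog_intervalIntegrable {x y : ℝ} (hx : 1 < x) (hy : 1 < y) :
    IntervalIntegrable (fun τ : ℝ => 1 / Real.log τ) MeasureTheory.volume x y := by
  apply (invlog_continuousOn.mono ?_).intervalIntegrable
  intro s hs
  rcases hs with ⟨h1, _⟩
  have : min x y ≤ s := h1
  have : 1 < min x y := lt_min hx hy
  exact lt_of_lt_of_le this h1

lemma li_hasDerivAt {x : ℝ} (hx : 1 < x) : HasDerivAt li (1 / Real.log x) x := by
  apply intervalIntegral.integral_hasDerivAt_right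
  · exact invlog_intervalIntegrable one_lt_two hx
  · exact invlog_continuousOn.stronglyMeasurableAtFilter isOpen_Ioi x hx
  · exact (continuousAt_const.div (Real.continuousAt_log (by linarith))
      (ne_of_gt (Real.log_pos hx)))

lemma li_sub {x y : ℝ} (hx : 1 < x) (hy : 1 < y) :
    li y - li x = ∫ τ in x..y, 1 / Real.log τ := by
  have h := intervalIntegral.integral_add_adjacent_intervals
    (invlog_intervalIntegrable one_lt_two hx) (invlog_intervalIntegrable hx hy)
  unfold li
  linarith [h]

/-- Key monotonicity: `θ(θ-1)e^{-2θ}` is decreasing for `θ ≥ 2`. -/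
lemma key_exp {L θ : ℝ} (hL : 2 ≤ L) (hθ : L ≤ θ) :
    θ * (θ - 1) * Real.exp (2 * L) ≤ L * (L - 1) * Real.exp (2 * θ) := by
  have hu : 0 ≤ θ - L := by linarith
  have h1 : 1 + (θ - L) ≤ Real.exp (θ - L) := by
    have := Real.add_one_le_exp (θ - L); linarith
  have h2 : Real.exp (2 * θ) = Real.exp (2 * L) * (Real.exp (θ - L))^2 := by
    rw [← Real.exp_nat_mul]
    push_cast
    rw [← Real.exp_add]
    ring_nf
  have hE := Real.exp_pos (2 * L)
  have hE2 : (1 + (θ - L))^2 ≤ (Real.exp (θ - L))^2 := by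
    have h0 : 0 ≤ 1 + (θ - L) := by linarith
    exact pow_le_pow_left₀ h0 h1 2
  have hLL : (0:ℝ) ≤ L * (L - 1) := by nlinarith
  have hp1 : (0:ℝ) ≤ (θ - L) * (2*L^2 - 4*L + 1) := mul_nonneg hu (by nlinarith)
  have hp2 : (0:ℝ) ≤ (θ - L)^2 * (L^2 - L - 1) := mul_nonneg (sq_nonneg _) (by nlinarith)
  have h4 : θ * (θ - 1) ≤ L * (L - 1) * (1 + (θ - L))^2 := by nlinarith
  rw [h2]
  calc θ * (θ - 1) * Real.exp (2 * L)
      ≤ (L * (L - 1) * (1 + (θ - L))^2) * Real.exp (2 * L) :=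
        mul_le_mul_of_nonneg_right h4 hE.le
    _ ≤ (L * (L - 1) * (Real.exp (θ - L))^2) * Real.exp (2 * L) :=
        mul_le_mul_of_nonneg_right (mul_le_mul_of_nonneg_left hE2 hLL) hE.le
    _ = L * (L - 1) * (Real.exp (2 * L) * Real.exp (θ - L) ^ 2) := by ring

/-- Pointwise bound: for `s ≥ a` with `log a ≥ 2`,
`(log s)(log s - 1)/s² ≤ (log a)(log a - 1)/a²`. -/
lemma key_pointwise {a s : ℝ} (ha1 : 1 < a) (ha : 2 ≤ Real.log a) (has : a ≤ s) :
    Real.log s * (Real.log s - 1) * a^2 ≤ Real.log a * (Real.log a - 1) * s^2 := by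
  have ha0 : 0 < a := by linarith
  have hs0 : 0 < s := by linarith
  have hθ : Real.log a ≤ Real.log s := Real.log_le_log ha0 has
  have h := key_exp ha hθ
  have ea : Real.exp (2 * Real.log a) = a ^ 2 := by
    rw [two_mul, Real.exp_add, Real.exp_log ha0, sq]
  have es : Real.exp (2 * Real.log s) = s ^ 2 := by
    rw [two_mul, Real.exp_add, Real.exp_log hs0, sq]
  rw [ea, es] at h
  exact h

/-- Second-order Taylor lower bound for `log ∘ li⁻¹`: if `li b = li a + c` with
`log a ≥ 2`, then `log b ≥ log a + c (log a)/a − c² (log a)(log a − 1)/a²`. -/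
theorem log_inverse_li_taylor_lower_bound
    (a b c : ℝ) (ha : 1 < a) (hb : 1 < b) (hc : 0 ≤ c)
    (hloga : 2 ≤ Real.log a)
    (hli : li b = li a + c) :
    Real.log a + c * Real.log a / a
      - c ^ 2 * Real.log a * (Real.log a - 1) / a ^ 2 ≤ Real.log b := by
  set L := Real.log a with hL
  set M := L * (L - 1) / a ^ 2 with hM
  have ha0 : 0 < a := by linarith
  have hM0 : 0 ≤ M := by
    apply div_nonneg (by nlinarith) (by positivity)
  -- b ≥ a
  have hab : a ≤ b := by
    by_contra h
    push_neg at h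
    have hpos : 0 < ∫ τ in b..a, 1 / Real.log τ := by
      apply intervalIntegral.intervalIntegral_pos_of_pos_on
        (invlog_intervalIntegrable hb ha) _ h
      intro x hx
      have : 1 < x := lt_trans hb hx.1
      exact div_pos one_pos (Real.log_pos this)
    have := li_sub hb ha
    linarith
  -- Step A : monotonicity of g τ = log τ / τ + M * li τ on [a, b]
  have hgder : ∀ τ ∈ Set.Icc a b, HasDerivAt (fun τ => Real.log τ / τ + M * li τ)
      ((1 - Real.log τ) / τ ^ 2 + M * (1 / Real.log τ)) τ := by
    intro τ hτ
    have hτ1 : 1 < τ := lt_of_lt_of_le ha hτ.1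
    have hτ0 : (0:ℝ) < τ := by linarith
    have h1 : HasDerivAt (fun τ : ℝ => Real.log τ / τ) ((1 - Real.log τ) / τ ^ 2) τ := by
      have := (Real.hasDerivAt_log (ne_of_gt hτ0)).fun_div (hasDerivAt_id τ) (ne_of_gt hτ0)
      refine this.congr_deriv ?_
      simp only [id, mul_one]
      rw [inv_mul_cancel₀ (ne_of_gt hτ0)]
    exact h1.add (((li_hasDerivAt hτ1)).const_mul M)
  have hgmono : MonotoneOn (fun τ => Real.log τ / τ + M * li τ) (Set.Icc a b) := by
    apply monotoneOn_of_deriv_nonneg (convex_Icc a b)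
    · exact fun τ hτ => (hgder τ hτ).continuousAt.continuousWithinAt
    · intro τ hτ
      rw [interior_Icc] at hτ
      exact ((hgder τ (Set.mem_Icc_of_Ioo hτ)).differentiableAt).differentiableWithinAt
    · intro τ hτ
      rw [interior_Icc] at hτ
      rw [(hgder τ (Set.mem_Icc_of_Ioo hτ)).deriv]
      have hτa : a ≤ τ := le_of_lt hτ.1
      have hτ1 : 1 < τ := lt_of_lt_of_le ha hτa
      have hτ0 : (0:ℝ) < τ := by linarith
      have hlogτ : 2 ≤ Real.log τ := le_trans hloga (Real.log_le_log ha0 hτa)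
      have hkey := key_pointwise ha hloga hτa
      rw [← hL] at hkey
      -- M * (1 / log τ) ≥ (log τ - 1)/τ²
      have hlogτ0 : (0:ℝ) < Real.log τ := by linarith
      have h1 : (Real.log τ - 1) / τ ^ 2 ≤ M * (1 / Real.log τ) := by
        rw [div_le_iff₀ (by positivity : (0:ℝ) < τ^2)]
        have h2 : M * (1 / Real.log τ) * τ ^ 2
            = L * (L - 1) * τ ^ 2 / (a ^ 2 * Real.log τ) := by
          rw [hM]; field_simp
        rw [h2, le_div_iff₀ (by positivity : (0:ℝ) < a ^ 2 * Real.log τ)]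
        calc (Real.log τ - 1) * (a ^ 2 * Real.log τ)
            = Real.log τ * (Real.log τ - 1) * a ^ 2 := by ring
          _ ≤ L * (L - 1) * τ ^ 2 := hkey
      have h3 : (1 - Real.log τ) / τ ^ 2 = -((Real.log τ - 1) / τ ^ 2) := by ring
      linarith
  -- Step A conclusion: for τ ∈ [a,b], log τ / τ ≥ L/a - M * (li τ - li a)
  have hstepA : ∀ τ ∈ Set.Icc a b, L / a - M * (li τ - li a) ≤ Real.log τ / τ := by
    intro τ hτ
    have := hgmono (Set.left_mem_Icc.mpr hab) hτ hτ.1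
    simp only at this
    linarith
  -- Step B : H τ = log τ - (L/a) * li τ + (M/2) * (li τ - li a)^2
  have hHder : ∀ τ ∈ Set.Icc a b, HasDerivAt
      (fun τ => Real.log τ - (L / a) * li τ + (M / 2) * (li τ - li a) ^ 2)
      (1 / τ - (L / a) * (1 / Real.log τ)
        + (M / 2) * (2 * (li τ - li a) ^ 1 * (1 / Real.log τ))) τ := by
    intro τ hτ
    have hτ1 : 1 < τ := lt_of_lt_of_le ha hτ.1
    have hτ0 : (0:ℝ) < τ := by linarith
    have h1 : HasDerivAt (fun τ : ℝ => Real.log τ) (1 / τ) τ := by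
      simpa [one_div] using Real.hasDerivAt_log (ne_of_gt hτ0)
    have h2 := (li_hasDerivAt hτ1).const_mul (L / a)
    have h3 : HasDerivAt (fun τ => (li τ - li a) ^ 2)
        (2 * (li τ - li a) ^ 1 * (1 / Real.log τ)) τ := by
      have := ((li_hasDerivAt hτ1).sub_const (li a)).fun_pow 2
      simpa using this
    exact (h1.sub h2).add (h3.const_mul (M / 2))
  have hHmono : MonotoneOn
      (fun τ => Real.log τ - (L / a) * li τ + (M / 2) * (li τ - li a) ^ 2)
      (Set.Icc a b) := by
    apply monotoneOn_of_deriv_nonneg (convex_Icc a b)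
    · exact fun τ hτ => (hHder τ hτ).continuousAt.continuousWithinAt
    · intro τ hτ
      rw [interior_Icc] at hτ
      exact ((hHder τ (Set.mem_Icc_of_Ioo hτ)).differentiableAt).differentiableWithinAt
    · intro τ hτ
      rw [interior_Icc] at hτ
      rw [(hHder τ (Set.mem_Icc_of_Ioo hτ)).deriv]
      have hτmem : τ ∈ Set.Icc a b := Set.mem_Icc_of_Ioo hτ
      have hτ1 : 1 < τ := lt_of_lt_of_le ha hτmem.1
      have hτ0 : (0:ℝ) < τ := by linarith
      have hlogτ : 0 < Real.log τ := Real.log_pos hτ1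
      have hA := hstepA τ hτmem
      -- need 1/τ ≥ (L/a - M*(li τ - li a)) / log τ
      have h4 : (L / a - M * (li τ - li a)) / Real.log τ ≤ 1 / τ := by
        rw [div_le_div_iff₀ hlogτ hτ0]
        have hcancel : Real.log τ / τ * τ = Real.log τ := div_mul_cancel₀ _ (ne_of_gt hτ0)
        have := mul_le_mul_of_nonneg_right hA (le_of_lt hτ0)
        linarith
      have h5 : (L / a) * (1 / Real.log τ) - (M / 2) * (2 * (li τ - li a) ^ 1 * (1 / Real.log τ))
          = (L / a - M * (li τ - li a)) / Real.log τ := by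
        field_simp
      linarith
  -- Conclude
  have hfinal := hHmono (Set.left_mem_Icc.mpr hab) (Set.right_mem_Icc.mpr hab) hab
  simp only at hfinal
  have hcval : li b - li a = c := by linarith
  rw [hcval] at hfinal
  have hlogb : Real.log a - (L / a) * li a + (M / 2) * (li a - li a) ^ 2
      ≤ Real.log b - (L / a) * li b + (M / 2) * c ^ 2 := hfinal
  have hlib : li b = li a + c := hli
  have hMc : (M / 2) * c ^ 2 ≤ c ^ 2 * L * (L - 1) / a ^ 2 := by
    rw [hM]
    have : L * (L - 1) / a ^ 2 / 2 * c ^ 2 ≤ L * (L - 1) / a ^ 2 * c ^ 2 := by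
      apply mul_le_mul_of_nonneg_right _ (sq_nonneg c)
      linarith [hM0, hM]
    calc L * (L - 1) / a ^ 2 / 2 * c ^ 2 ≤ L * (L - 1) / a ^ 2 * c ^ 2 := this
      _ = c ^ 2 * L * (L - 1) / a ^ 2 := by ring
  have hexp : Real.log b ≥ Real.log a + (L / a) * c - (M / 2) * c ^ 2 := by
    have h6 : (L / a) * li b = (L / a) * li a + (L / a) * c := by rw [hlib]; ring
    nlinarith [hlogb, h6]
  have : c * L / a = (L / a) * c := by ring
  linarith [hMc, hexp]
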